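/- arXiv:2403.07143 — 2 statements merged into one kernel-verified Lean document; each statement's English description precedes it below -/
import Mathlib

section
/- (Contracting–pricing reduction) Let $D:[0,1]\to[0,1]$ be a strictly decreasing, continuous demand curve. Define the cost function $c(a) = \int_0^a [1 - D^{-1}(x)]\,dx$ on the range of $D$. Then $c$ is convex, and for any $\alpha \in [0,1]$, the agent's best response to the linear contract keeping fraction $\alpha$ for the principal (i.e., maximizing $(1-\alpha) a - c(a)$ over $a$) equals $D(\alpha)$; consequently the principal's expected utility $\alpha \cdot a(\alpha)$ equals the seller's revenue $p \cdot D(p)$ at price $p = \alpha$. -/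
/-- Contracting–pricing reduction. For a strictly decreasing continuous
demand curve `D : [0,1] → [0,1]` with inverse `Dinv`, the cost
`c(a) = ∫₀ᵃ (1 - Dinv x) dx` is convex, the agent's best response to the linear
contract keeping fraction `α` for the principal is exactly `D α`, and the
principal's utility `α · a(α)` equals the pricing revenue `α · D α`. -/
theorem contracting_pricing_reduction
    (D Dinv : ℝ → ℝ)
    (hDanti : StrictAntiOn D (Set.Icc 0 1))
    (hDcont : ContinuousOn D (Set.Icc 0 1))
    (hDrange : ∀ p ∈ Set.Icc (0:ℝ) 1, D p ∈ Set.Icc (0:ℝ) 1)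
    (hDinv : ∀ p ∈ Set.Icc (0:ℝ) 1, Dinv (D p) = p)
    (hDinvRange : ∀ x ∈ Set.Icc (0:ℝ) 1, Dinv x ∈ Set.Icc (0:ℝ) 1)
    (hDinvAnti : AntitoneOn Dinv (Set.Icc 0 1))
    (c : ℝ → ℝ) (hc : ∀ a, c a = ∫ x in (0:ℝ)..a, (1 - Dinv x)) :
    ConvexOn ℝ (Set.Icc 0 1) c ∧
    ∃ A : ℝ → ℝ, ∀ α ∈ Set.Icc (0:ℝ) 1,
      IsMaxOn (fun a => (1 - α) * a - c a) (Set.Icc (0:ℝ) 1) (A α) ∧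
      A α = D α ∧
      α * A α = α * D α := by
  have hgmono : MonotoneOn (fun x => 1 - Dinv x) (Set.Icc (0:ℝ) 1) := by
    intro x hx y hy hxy
    have := hDinvAnti hx hy hxy
    simp only
    linarith
  have h01 : (0:ℝ) ∈ Set.Icc (0:ℝ) 1 := Set.left_mem_Icc.mpr zero_le_one
  have hint : ∀ u ∈ Set.Icc (0:ℝ) 1, ∀ v ∈ Set.Icc (0:ℝ) 1,
      IntervalIntegrable (fun x => 1 - Dinv x) MeasureTheory.volume u v := by
    intro u hu v hv
    exact (hgmono.mono (Set.uIcc_subset_Icc hu hv)).intervalIntegrable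
  have hdiff : ∀ u ∈ Set.Icc (0:ℝ) 1, ∀ v ∈ Set.Icc (0:ℝ) 1,
      c v - c u = ∫ x in u..v, (1 - Dinv x) := by
    intro u hu v hv
    rw [hc, hc]
    exact intervalIntegral.integral_interval_sub_left (hint 0 h01 v hv) (hint 0 h01 u hu)
  constructor
  · apply convexOn_of_slope_mono_adjacent (convex_Icc 0 1)
    intro x y z hx hz hxy hyz
    have hy : y ∈ Set.Icc (0:ℝ) 1 := ⟨le_trans hx.1 hxy.le, le_trans hyz.le hz.2⟩
    have hxy' : (0:ℝ) < y - x := sub_pos.mpr hxy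
    have hyz' : (0:ℝ) < z - y := sub_pos.mpr hyz
    have h1 : c y - c x = ∫ t in x..y, (1 - Dinv t) := hdiff x hx y hy
    have h2 : c z - c y = ∫ t in y..z, (1 - Dinv t) := hdiff y hy z hz
    have hub : (∫ t in x..y, (1 - Dinv t)) ≤ (y - x) * (1 - Dinv y) := by
      calc (∫ t in x..y, (1 - Dinv t)) ≤ ∫ _t in x..y, (1 - Dinv y) :=
            intervalIntegral.integral_mono_on hxy.le (hint x hx y hy)
              intervalIntegrable_const
              (fun t ht => hgmono ⟨le_trans hx.1 ht.1, le_trans ht.2 hy.2⟩ hy ht.2)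
        _ = (y - x) * (1 - Dinv y) := by
            rw [intervalIntegral.integral_const, smul_eq_mul]
    have hlb : (z - y) * (1 - Dinv y) ≤ ∫ t in y..z, (1 - Dinv t) := by
      calc (z - y) * (1 - Dinv y) = ∫ _t in y..z, (1 - Dinv y) := by
            rw [intervalIntegral.integral_const, smul_eq_mul]
        _ ≤ ∫ t in y..z, (1 - Dinv t) :=
            intervalIntegral.integral_mono_on hyz.le intervalIntegrable_const
              (hint y hy z hz)
              (fun t ht => hgmono hy ⟨le_trans hy.1 ht.1, le_trans ht.2 hz.2⟩ ht.1)
    have A : (c y - c x) / (y - x) ≤ 1 - Dinv y := by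
      rw [div_le_iff₀ hxy']
      calc c y - c x = ∫ t in x..y, (1 - Dinv t) := h1
        _ ≤ (y - x) * (1 - Dinv y) := hub
        _ = (1 - Dinv y) * (y - x) := mul_comm _ _
    have B : 1 - Dinv y ≤ (c z - c y) / (z - y) := by
      rw [le_div_iff₀ hyz']
      calc (1 - Dinv y) * (z - y) = (z - y) * (1 - Dinv y) := mul_comm _ _
        _ ≤ ∫ t in y..z, (1 - Dinv t) := hlb
        _ = c z - c y := h2.symm
    linarith
  · refine ⟨D, fun α hα => ?_⟩
    refine ⟨?_, rfl, rfl⟩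
    have hb : D α ∈ Set.Icc (0:ℝ) 1 := hDrange α hα
    intro a ha
    simp only [Set.mem_setOf_eq]
    have h1 : c (D α) - c a = ∫ x in a..(D α), (1 - Dinv x) := hdiff a ha (D α) hb
    have key : (1 - α) * D α - c (D α) - ((1 - α) * a - c a)
        = ∫ x in a..(D α), (Dinv x - α) := by
      have h2 : (∫ x in a..(D α), (Dinv x - α))
          = ∫ x in a..(D α), ((1 - α) - (1 - Dinv x)) := by
        congr 1; funext x; ring
      rw [h2, intervalIntegral.integral_sub intervalIntegrable_const (hint a ha (D α) hb),
        intervalIntegral.integral_const, smul_eq_mul, ← h1]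
      ring
    have hnn : 0 ≤ ∫ x in a..(D α), (Dinv x - α) := by
      rcases le_total a (D α) with h | h
      · apply intervalIntegral.integral_nonneg h
        intro u hu
        have hu1 : u ∈ Set.Icc (0:ℝ) 1 := ⟨le_trans ha.1 hu.1, le_trans hu.2 hb.2⟩
        have := hDinvAnti hu1 hb hu.2
        rw [hDinv α hα] at this
        linarith
      · rw [intervalIntegral.integral_symm (D α) a]
        have hneg : (∫ x in (D α)..a, (Dinv x - α))
            = - ∫ x in (D α)..a, (α - Dinv x) := by
          rw [← intervalIntegral.integral_neg]
          congr 1; funext x; ring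
        have hpos : 0 ≤ ∫ x in (D α)..a, (α - Dinv x) := by
          apply intervalIntegral.integral_nonneg h
          intro u hu
          have hu1 : u ∈ Set.Icc (0:ℝ) 1 := ⟨le_trans hb.1 hu.1, le_trans hu.2 ha.2⟩
          have := hDinvAnti hb hu1 hu.1
          rw [hDinv α hα] at this
          linarith
        linarith
    linarith [key, hnn]
end

section
/- If $0 = \beta^{(0)} < \beta^{(1)} < \dots < \beta^{(i)}$ with $\beta^{(i)} \le \beta_{\max}$, and $|\hat r(a^{(j)}) - \hat r(a^{(j-1)})| \le 3\varepsilon$ for all $j \le i$, then the width of the cost confidence interval satisfies $c^{UCB}(a^{(i)}) - c^{LCB}(a^{(i)}) \le \sum_{j=1}^i (\beta^{(j)} - \beta^{(j-1)}) \cdot 3\varepsilon + 6\varepsilon \le 3\beta_{\max}\varepsilon + 6\varepsilon$. -/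
open Finset

/-- Width of the cost confidence interval. With strictly increasing
contracts `0 = β⁽⁰⁾ < … < β⁽ⁱ⁾ ≤ β_max` and `|r̂(a⁽ʲ⁾) - r̂(a⁽ʲ⁻¹⁾)| ≤ 3ε`,
`c^UCB - c^LCB ≤ ∑ⱼ (βⱼ - βⱼ₋₁) · 3ε + 6ε ≤ 3 β_max ε + 6ε`. -/
theorem cost_confidence_interval_width
    (β rhat : ℕ → ℝ) (βmax ε : ℝ) (hε : 0 ≤ ε) (i : ℕ)
    (hβ0 : β 0 = 0) (hβmono : ∀ j < i, β j < β (j + 1)) (hβmax : β i ≤ βmax)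
    (hrhat : ∀ j, 1 ≤ j → j ≤ i → |rhat j - rhat (j - 1)| ≤ 3 * ε) :
    ((∑ j ∈ Finset.Icc 1 i, β j * (rhat j - rhat (j - 1))) + 3 * ε)
        - ((∑ j ∈ Finset.Icc 1 i, β (j - 1) * (rhat j - rhat (j - 1))) - 3 * ε)
      ≤ (∑ j ∈ Finset.Icc 1 i, (β j - β (j - 1)) * (3 * ε)) + 6 * ε ∧
    (∑ j ∈ Finset.Icc 1 i, (β j - β (j - 1)) * (3 * ε)) + 6 * ε
      ≤ 3 * βmax * ε + 6 * ε := by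
  have key : ∀ j ∈ Finset.Icc 1 i, 0 ≤ β j - β (j - 1) := by
    intro j hj
    simp only [Finset.mem_Icc] at hj
    obtain ⟨h1, h2⟩ := hj
    obtain ⟨k, rfl⟩ := Nat.exists_eq_add_of_le h1
    have hk : β k < β (k + 1) := hβmono k (by omega)
    have he : 1 + k = k + 1 := by omega
    rw [he]
    simp only [Nat.add_sub_cancel]
    linarith
  have htel : ∀ n, (∑ j ∈ Finset.Icc 1 n, (β j - β (j - 1))) = β n := by
    intro n
    induction n with
    | zero => simp [hβ0]
    | succ n ih =>
      rw [Finset.sum_Icc_succ_top (by omega), ih]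
      simp
  constructor
  · have hsum : (∑ j ∈ Finset.Icc 1 i, β j * (rhat j - rhat (j - 1)))
        - (∑ j ∈ Finset.Icc 1 i, β (j - 1) * (rhat j - rhat (j - 1)))
        = ∑ j ∈ Finset.Icc 1 i, (β j - β (j - 1)) * (rhat j - rhat (j - 1)) := by
      rw [← Finset.sum_sub_distrib]
      exact Finset.sum_congr rfl fun j _ => by ring
    have h2 : (∑ j ∈ Finset.Icc 1 i, (β j - β (j - 1)) * (rhat j - rhat (j - 1)))
        ≤ ∑ j ∈ Finset.Icc 1 i, (β j - β (j - 1)) * (3 * ε) := by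
      apply Finset.sum_le_sum
      intro j hj
      have hm := Finset.mem_Icc.mp hj
      exact mul_le_mul_of_nonneg_left
        (le_trans (le_abs_self _) (hrhat j hm.1 hm.2)) (key j hj)
    linarith
  · have : (∑ j ∈ Finset.Icc 1 i, (β j - β (j - 1)) * (3 * ε)) = β i * (3 * ε) := by
      rw [← Finset.sum_mul, htel]
    rw [this]
    nlinarith [hβmax]
end
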